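/- For the X-shaped two-qubit density matrix ρ = (1/T)·[diag(λ, a, b, s) with off-diagonal n between |01⟩ and |10⟩], the Wootters concurrence equals C(ρ) = max{0, (2/T)(n − √(λ s))}. -/
import Mathlib

open Polynomial

noncomputable def xMat (l a b s n : ℝ) : Matrix (Fin 2 × Fin 2) (Fin 2 × Fin 2) ℂ :=
  fun p q =>
    (((l + a + b + s : ℝ) : ℂ))⁻¹ *
      (if p = (0, 0) ∧ q = (0, 0) then (l : ℂ)
        else if p = (0, 1) ∧ q = (0, 1) then (a : ℂ)
        else if p = (1, 0) ∧ q = (1, 0) then (b : ℂ)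
        else if p = (1, 1) ∧ q = (1, 1) then (s : ℂ)
        else if (p = (0, 1) ∧ q = (1, 0)) ∨ (p = (1, 0) ∧ q = (0, 1)) then (n : ℂ)
        else 0)

noncomputable def pauliY : Matrix (Fin 2) (Fin 2) ℂ :=
  !![0, -Complex.I; Complex.I, 0]

noncomputable def YY : Matrix (Fin 2 × Fin 2) (Fin 2 × Fin 2) ℂ :=
  fun p q => pauliY p.1 q.1 * pauliY p.2 q.2

noncomputable def woottersR (ρ : Matrix (Fin 2 × Fin 2) (Fin 2 × Fin 2) ℂ) :
    Matrix (Fin 2 × Fin 2) (Fin 2 × Fin 2) ℂ :=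
  ρ * YY * ρ.map (starRingEnd ℂ) * YY

/-- explicit index equivalence -/
def qIdx : Fin 4 ≃ (Fin 2 × Fin 2) where
  toFun := ![(0,0),(0,1),(1,0),(1,1)]
  invFun := fun p => ![![0,1],![2,3]] p.1 p.2
  left_inv := by decide
  right_inv := by decide

lemma hreX (l a b s n : ℝ) :
    Matrix.reindex qIdx.symm qIdx.symm (xMat l a b s n) =
      (((l + a + b + s : ℝ)) : ℂ)⁻¹ •
        !![(l:ℂ), 0, 0, 0; 0, a, n, 0; 0, n, b, 0; 0, 0, 0, s] := by
  ext i j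
  fin_cases i <;> fin_cases j <;>
    simp [xMat, qIdx, Prod.ext_iff, Fin.ext_iff, Matrix.vecHead, Matrix.vecTail]

lemma hreXstar (l a b s n : ℝ) :
    Matrix.reindex qIdx.symm qIdx.symm ((xMat l a b s n).map (starRingEnd ℂ)) =
      (((l + a + b + s : ℝ)) : ℂ)⁻¹ •
        !![(l:ℂ), 0, 0, 0; 0, a, n, 0; 0, n, b, 0; 0, 0, 0, s] := by
  ext i j
  fin_cases i <;> fin_cases j <;>
    simp [xMat, qIdx, Prod.ext_iff, Fin.ext_iff, Matrix.vecHead, Matrix.vecTail,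
      Matrix.map_apply, map_mul, map_inv₀, Complex.conj_ofReal, apply_ite (starRingEnd ℂ)]

lemma hreY :
    Matrix.reindex qIdx.symm qIdx.symm YY =
      !![0, 0, 0, -1; 0, 0, 1, 0; 0, 1, 0, 0; -1, 0, 0, 0] := by
  ext i j
  fin_cases i <;> fin_cases j <;>
    simp [YY, pauliY, qIdx, Matrix.vecHead, Matrix.vecTail, Complex.ext_iff]

lemma mul1 (t l a b s n : ℂ) :
    (t • !![(l:ℂ), 0, 0, 0; 0, a, n, 0; 0, n, b, 0; 0, 0, 0, s]) *
      !![0, 0, 0, -1; 0, 0, 1, 0; 0, 1, 0, 0; -1, 0, 0, 0] =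
    t • !![0, 0, 0, -l; 0, n, a, 0; 0, b, n, 0; -s, 0, 0, 0] := by
  ext i j
  fin_cases i <;> fin_cases j <;>
    simp [Matrix.mul_apply, Fin.sum_univ_four, Matrix.vecHead, Matrix.vecTail]

lemma mul2 (t l a b s n : ℂ) :
    (t • !![0, 0, 0, -l; 0, n, a, 0; 0, b, n, 0; -s, 0, 0, 0]) *
      (t • !![(l:ℂ), 0, 0, 0; 0, a, n, 0; 0, n, b, 0; 0, 0, 0, s]) =
    (t^2) • !![0, 0, 0, -(l*s); 0, 2*a*n, n^2+a*b, 0; 0, a*b+n^2, 2*b*n, 0; -(s*l), 0, 0, 0] := by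
  ext i j
  fin_cases i <;> fin_cases j <;>
    (simp [Matrix.mul_apply, Fin.sum_univ_four, Matrix.vecHead, Matrix.vecTail]; try ring)

lemma mul3 (t l a b s n : ℂ) :
    ((t^2) • !![0, 0, 0, -(l*s); 0, 2*a*n, n^2+a*b, 0; 0, a*b+n^2, 2*b*n, 0; -(s*l), 0, 0, 0]) *
      !![0, 0, 0, -1; 0, 0, 1, 0; 0, 1, 0, 0; -1, 0, 0, 0] =
    (t^2) • !![l*s, 0, 0, 0; 0, n^2+a*b, 2*a*n, 0; 0, 2*b*n, a*b+n^2, 0; 0, 0, 0, s*l] := by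
  ext i j
  fin_cases i <;> fin_cases j <;>
    (simp [Matrix.mul_apply, Fin.sum_univ_four, Matrix.vecHead, Matrix.vecTail]; try ring)

lemma charpoly4 (d1 A u v A' d4 : ℂ) :
    (!![d1, 0, 0, 0; 0, A, u, 0; 0, v, A', 0; 0, 0, 0, d4] : Matrix (Fin 4) (Fin 4) ℂ).charpoly
      = (X - C d1) * ((X - C A) * (X - C A') - C u * C v) * (X - C d4) := by
  have hc : (!![d1, 0, 0, 0; 0, A, u, 0; 0, v, A', 0; 0, 0, 0, d4] : Matrix (Fin 4) (Fin 4) ℂ).charmatrix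
      = !![X - C d1, 0, 0, 0; 0, X - C A, -C u, 0; 0, -C v, X - C A', 0; 0, 0, 0, X - C d4] := by
    ext i j
    fin_cases i <;> fin_cases j <;>
      simp [Matrix.charmatrix_apply_eq, Matrix.charmatrix_apply_ne, Matrix.vecHead, Matrix.vecTail]
  rw [Matrix.charpoly, hc]
  simp [Matrix.det_succ_row_zero, Fin.sum_univ_succ, Matrix.vecHead, Matrix.vecTail]
  ring

lemma xCharpoly (l a b s n : ℝ) (hab : 0 ≤ a * b) (hls : 0 ≤ l * s) :
    (woottersR (xMat l a b s n)).charpoly =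
      ∏ i : Fin 4, (X - C (((((![(l+a+b+s)⁻¹ * (Real.sqrt (a*b) + n),
          (l+a+b+s)⁻¹ * (Real.sqrt (a*b) - n),
          (l+a+b+s)⁻¹ * Real.sqrt (l*s),
          (l+a+b+s)⁻¹ * Real.sqrt (l*s)] : Fin 4 → ℝ) i) ^ 2 : ℝ)) : ℂ)) := by
  have hre : Matrix.reindex qIdx.symm qIdx.symm (woottersR (xMat l a b s n)) =
      ((((l + a + b + s : ℝ)) : ℂ)⁻¹^2) • !![(l:ℂ)*s, 0, 0, 0; 0, (n:ℂ)^2+(a:ℂ)*b, 2*(a:ℂ)*n, 0;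
                 0, 2*(b:ℂ)*n, (a:ℂ)*b+(n:ℂ)^2, 0; 0, 0, 0, (s:ℂ)*l] := by
    have hw : woottersR (xMat l a b s n) =
        (xMat l a b s n) * YY * ((xMat l a b s n).map (starRingEnd ℂ)) * YY := rfl
    rw [hw]
    have hmul : ∀ (A B : Matrix (Fin 2 × Fin 2) (Fin 2 × Fin 2) ℂ),
        Matrix.reindex qIdx.symm qIdx.symm (A * B) =
          Matrix.reindex qIdx.symm qIdx.symm A * Matrix.reindex qIdx.symm qIdx.symm B := by
      intro A B
      simp [Matrix.reindex_apply, Matrix.submatrix_mul_equiv]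
    rw [hmul, hmul, hmul, hreX, hreXstar, hreY, mul1, mul2, mul3]
  have hcp := Matrix.charpoly_reindex (R := ℂ) qIdx.symm (woottersR (xMat l a b s n))
  rw [← hcp, hre]
  have hsm : (((((l + a + b + s : ℝ)) : ℂ)⁻¹^2) • !![(l:ℂ)*s, 0, 0, 0; 0, (n:ℂ)^2+(a:ℂ)*b, 2*(a:ℂ)*n, 0;
        0, 2*(b:ℂ)*n, (a:ℂ)*b+(n:ℂ)^2, 0; 0, 0, 0, (s:ℂ)*l]) =
      !![(((l + a + b + s : ℝ)) : ℂ)⁻¹^2*((l:ℂ)*s), 0, 0, 0;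
         0, (((l + a + b + s : ℝ)) : ℂ)⁻¹^2*((n:ℂ)^2+(a:ℂ)*b), (((l + a + b + s : ℝ)) : ℂ)⁻¹^2*(2*(a:ℂ)*n), 0;
         0, (((l + a + b + s : ℝ)) : ℂ)⁻¹^2*(2*(b:ℂ)*n), (((l + a + b + s : ℝ)) : ℂ)⁻¹^2*((a:ℂ)*b+(n:ℂ)^2), 0;
         0, 0, 0, (((l + a + b + s : ℝ)) : ℂ)⁻¹^2*((s:ℂ)*l)] := by
    ext i j
    fin_cases i <;> fin_cases j <;> simp [Matrix.vecHead, Matrix.vecTail]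
  rw [hsm, charpoly4, Fin.prod_univ_four]
  simp only [Matrix.cons_val_zero, Matrix.cons_val_one, Matrix.head_cons,
    Matrix.cons_val_two, Matrix.cons_val_three, Matrix.tail_cons]
  push_cast
  set t : ℂ := ((l:ℂ) + (a:ℂ) + (b:ℂ) + (s:ℂ))⁻¹ with ht
  set p : ℂ := ((Real.sqrt (a*b) : ℝ) : ℂ) with hpd
  set q : ℂ := ((Real.sqrt (l*s) : ℝ) : ℂ) with hqd
  have hp : p^2 = (a:ℂ)*b := by
    rw [hpd, ← Complex.ofReal_pow, Real.sq_sqrt hab]; push_cast; ring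
  have hq : q^2 = (l:ℂ)*s := by
    rw [hqd, ← Complex.ofReal_pow, Real.sq_sqrt hls]; push_cast; ring
  have e01 : (X - C ((t * (p + (n:ℂ)))^2)) * (X - C ((t * (p - (n:ℂ)))^2)) =
      X^2 - C (2*t^2*((a:ℂ)*b + (n:ℂ)^2)) * X + C (t^4*((a:ℂ)*b - (n:ℂ)^2)^2) := by
    have h1 : (t * (p + (n:ℂ)))^2 + (t * (p - (n:ℂ)))^2 = 2*t^2*((a:ℂ)*b + (n:ℂ)^2) := by
      linear_combination (2*t^2) * hp
    have h2 : (t * (p + (n:ℂ)))^2 * (t * (p - (n:ℂ)))^2 = t^4*((a:ℂ)*b - (n:ℂ)^2)^2 := by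
      linear_combination (t^4 * (p^2 + (a:ℂ)*b - 2*(n:ℂ)^2)) * hp
    rw [show (X - C ((t * (p + (n:ℂ)))^2)) * (X - C ((t * (p - (n:ℂ)))^2)) =
        X^2 - C ((t * (p + (n:ℂ)))^2 + (t * (p - (n:ℂ)))^2) * X
          + C ((t * (p + (n:ℂ)))^2 * (t * (p - (n:ℂ)))^2) by
      rw [map_add, map_mul]; ring]
    rw [h1, h2]
  have e2 : ((t * q)^2) = t^2*((l:ℂ)*s) := by linear_combination t^2 * hq
  rw [e01, e2]
  simp only [map_mul, map_add, map_sub, map_pow, map_ofNat]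
  ring

/-- For the X-shaped two-qubit density matrix, the Wootters concurrence equals
`max {0, (2/T)(n − √(λ s))}`: if `μ₀ ≥ μ₁ ≥ μ₂ ≥ μ₃ ≥ 0` are the square roots
of the eigenvalues of `R = ρ(σ_y⊗σ_y)ρ*(σ_y⊗σ_y)` (i.e. the characteristic
polynomial of `R` is `∏ᵢ (X − μᵢ²)`), then
`max {0, μ₀ − μ₁ − μ₂ − μ₃} = max {0, (2/T)(n − √(l·s))}`. -/
theorem stmt12 (l a b s n : ℝ) (hl : 0 ≤ l) (ha : 0 ≤ a) (hb : 0 ≤ b) (hs : 0 ≤ s)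
    (hn : 0 ≤ n) (hρ : n ^ 2 ≤ a * b) (hT : 0 < l + a + b + s)
    (μ : Fin 4 → ℝ) (hmono : Antitone μ) (hpos : ∀ i, 0 ≤ μ i)
    (heig : (woottersR (xMat l a b s n)).charpoly =
      ∏ i : Fin 4, (X - C ((μ i : ℂ) ^ 2))) :
    max 0 (μ 0 - μ 1 - μ 2 - μ 3) =
      max 0 ((2 / (l + a + b + s)) * (n - Real.sqrt (l * s))) := by
  have hab : (0:ℝ) ≤ a * b := mul_nonneg ha hb
  have hls : (0:ℝ) ≤ l * s := mul_nonneg hl hs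
  set w : Fin 4 → ℝ := ![(l+a+b+s)⁻¹ * (Real.sqrt (a*b) + n),
      (l+a+b+s)⁻¹ * (Real.sqrt (a*b) - n),
      (l+a+b+s)⁻¹ * Real.sqrt (l*s),
      (l+a+b+s)⁻¹ * Real.sqrt (l*s)] with hw
  have key := xCharpoly l a b s n hab hls
  rw [heig] at key
  -- multiset of roots
  have hroots : (Finset.univ.val.map fun i => ((μ i : ℂ)) ^ 2) =
      Finset.univ.val.map fun i => (((w i) ^ 2 : ℝ) : ℂ) := by
    have h1 : ((Finset.univ.val.map fun i => ((μ i : ℂ)) ^ 2).map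
        fun z => X - C z).prod = ((Finset.univ.val.map fun i => (((w i) ^ 2 : ℝ) : ℂ)).map
        fun z => X - C z).prod := by
      rw [Multiset.map_map, Multiset.map_map]
      rw [show (∏ i : Fin 4, (X - C ((μ i : ℂ) ^ 2))) =
        (Finset.univ.val.map ((fun z => X - C z) ∘ fun i => ((μ i : ℂ)) ^ 2)).prod from rfl] at key
      rw [key]; rfl
    have h2 := congrArg Polynomial.roots h1
    rwa [Polynomial.roots_multiset_prod_X_sub_C, Polynomial.roots_multiset_prod_X_sub_C] at h2
  -- push to real square roots
  have hnp : n ≤ Real.sqrt (a*b) := by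
    calc n = Real.sqrt (n^2) := (Real.sqrt_sq hn).symm
    _ ≤ Real.sqrt (a*b) := Real.sqrt_le_sqrt hρ
  have hTi : (0:ℝ) ≤ (l+a+b+s)⁻¹ := inv_nonneg.mpr hT.le
  have hQ0 : 0 ≤ Real.sqrt (l*s) := Real.sqrt_nonneg _
  have hP0 : 0 ≤ Real.sqrt (a*b) := Real.sqrt_nonneg _
  have hw0v : w 0 = (l+a+b+s)⁻¹ * (Real.sqrt (a*b) + n) := by simp [hw]
  have hw1v : w 1 = (l+a+b+s)⁻¹ * (Real.sqrt (a*b) - n) := by simp [hw]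
  have hw2v : w 2 = (l+a+b+s)⁻¹ * Real.sqrt (l*s) := by simp [hw]
  have hw3v : w 3 = (l+a+b+s)⁻¹ * Real.sqrt (l*s) := by simp [hw]
  have hwpos : ∀ i, 0 ≤ w i := by
    intro i
    fin_cases i
    · rw [show w ⟨0,by norm_num⟩ = w 0 from rfl, hw0v]
      exact mul_nonneg hTi (by linarith)
    · rw [show w ⟨1,by norm_num⟩ = w 1 from rfl, hw1v]
      exact mul_nonneg hTi (by linarith)
    · rw [show w ⟨2,by norm_num⟩ = w 2 from rfl, hw2v]
      exact mul_nonneg hTi hQ0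
    · rw [show w ⟨3,by norm_num⟩ = w 3 from rfl, hw3v]
      exact mul_nonneg hTi hQ0
  -- real multiset equality
  have hreal : (Finset.univ.val.map μ) = Finset.univ.val.map w := by
    have h := congrArg (Multiset.map (fun z : ℂ => Real.sqrt z.re)) hroots
    rw [Multiset.map_map, Multiset.map_map] at h
    have hL : ((fun z : ℂ => Real.sqrt z.re) ∘ fun i => ((μ i : ℂ)) ^ 2) = μ := by
      funext i
      simp only [Function.comp_apply, ← Complex.ofReal_pow, Complex.ofReal_re]
      exact Real.sqrt_sq (hpos i)
    have hR : ((fun z : ℂ => Real.sqrt z.re) ∘ fun i => (((w i) ^ 2 : ℝ) : ℂ)) = w := by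
      funext i
      simp only [Function.comp_apply, Complex.ofReal_re]
      exact Real.sqrt_sq (hwpos i)
    rwa [hL, hR] at h
  have huniv : (Finset.univ.val : Multiset (Fin 4)) = {0, 1, 2, 3} := rfl
  rw [huniv] at hreal
  have hM : ({μ 0, μ 1, μ 2, μ 3} : Multiset ℝ) = {w 0, w 1, w 2, w 3} := by
    simpa using hreal
  have hsum : μ 0 + μ 1 + μ 2 + μ 3 = w 0 + w 1 + w 2 + w 3 := by
    have := congrArg Multiset.sum hM
    simp only [Multiset.insert_eq_cons, Multiset.sum_cons, Multiset.sum_singleton] at this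
    linarith
  have hmem0 : μ 0 = w 0 ∨ μ 0 = w 1 ∨ μ 0 = w 2 ∨ μ 0 = w 3 := by
    have : μ 0 ∈ ({w 0, w 1, w 2, w 3} : Multiset ℝ) := by
      rw [← hM]; simp
    simpa using this
  have hle : ∀ x, x ∈ ({w 0, w 1, w 2, w 3} : Multiset ℝ) → x ≤ μ 0 := by
    intro x hx
    rw [← hM] at hx
    simp only [Multiset.insert_eq_cons, Multiset.mem_cons, Multiset.mem_singleton] at hx
    rcases hx with h|h|h|h <;> rw [h] <;> exact hmono (Fin.zero_le _)
  have hw0le : w 0 ≤ μ 0 := hle (w 0) (by simp)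
  rw [hw0v, hw1v, hw2v, hw3v] at hsum
  -- case analysis on which eigenvalue is largest
  have main : ∀ (h : μ 0 = (l+a+b+s)⁻¹ * (Real.sqrt (a*b) + n)),
      max 0 (μ 0 - μ 1 - μ 2 - μ 3) =
        max 0 ((2 / (l + a + b + s)) * (n - Real.sqrt (l * s))) := by
    intro h
    have harg : μ 0 - μ 1 - μ 2 - μ 3 = (2 / (l + a + b + s)) * (n - Real.sqrt (l * s)) := by
      rw [div_eq_mul_inv]
      linear_combination 2*h - hsum
    rw [harg]
  rcases hmem0 with h|h|h|h
  · exact main (by rwa [hw0v] at h)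
  · have h10 : w 1 ≤ w 0 := by
      rw [hw0v, hw1v]
      exact mul_le_mul_of_nonneg_left (by linarith) hTi
    have h' : μ 0 = w 0 := le_antisymm (le_trans (le_of_eq h) h10) hw0le
    exact main (by rwa [hw0v] at h')
  all_goals {
    have hq2 : μ 0 = (l+a+b+s)⁻¹ * Real.sqrt (l*s) := by
      first
        | rwa [hw2v] at h
        | rwa [hw3v] at h
    have hTpos : (0:ℝ) < (l+a+b+s)⁻¹ := inv_pos.mpr hT
    have hnq : Real.sqrt (a*b) + n ≤ Real.sqrt (l*s) := by
      have := hw0le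
      rw [hw0v, hq2] at this
      exact le_of_mul_le_mul_left this hTpos
    have hL0 : μ 0 - μ 1 - μ 2 - μ 3 ≤ 0 := by
      have h0 := hwpos 0
      have h1 := hwpos 1
      rw [hw0v] at h0
      rw [hw1v] at h1
      rw [hq2] at *
      linarith
    have hR0 : (2 / (l + a + b + s)) * (n - Real.sqrt (l * s)) ≤ 0 := by
      apply mul_nonpos_of_nonneg_of_nonpos
      · positivity
      · linarith
    rw [max_eq_left hL0, max_eq_left hR0]
  }
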